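/- Let μ be a probability measure on F_m, let g ∈ F_m \ {e}, and let B ⊆ F_m be a strong g-barrier. Then for every h ∈ C_fin(g) and every x ∈ F_m \ C_fin(g) one has F_μ(x, h) = Σ_{b ∈ B} F_μ(x, b; B \ {b}) · F_μ(b, h). -/

import Mathlib

open scoped BigOperators
set_option linter.unusedSectionVars false
set_option maxHeartbeats 1000000

/-- Restricted first-passage function `F_μ(x, y; S)`: the total weight of paths from `x`
to `y` that avoid `S ∪ {y}` before arriving at `y`. -/
noncomputable def FP {G : Type*} [Group G] (μ : G → ℝ) (x y : G) (S : Set G) : ℝ :=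
  ∑' k : ℕ,
    ∑' f : {f : Fin (k + 1) → G // f 0 = x ∧ f (Fin.last k) = y ∧
        ∀ j : Fin k, f j.castSucc ∉ S ∪ {y}},
      ∏ j : Fin k, μ ((f.1 j.castSucc)⁻¹ * f.1 j.succ)

/-- `μ` is a probability measure on `G`. -/
def IsProb {G : Type*} (μ : G → ℝ) : Prop := (∀ g, 0 ≤ μ g) ∧ ∑' g, μ g = 1

/-- Word length in the free group on `Fin m` w.r.t. the generators and their inverses. -/
def wl {m : ℕ} (g : FreeGroup (Fin m)) : ℕ := g.toWord.length

/-- The shadow `C_fin(g) = {g·x : |g·x| = |g| + |x|}`. -/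
def Cfin {m : ℕ} (g : FreeGroup (Fin m)) : Set (FreeGroup (Fin m)) :=
  {h | ∃ x, h = g * x ∧ wl (g * x) = wl g + wl x}

/-- `B` is a `g`-barrier: no path from `e` can reach the shadow of `g` avoiding `B`. -/
def IsBarrier {m : ℕ} (μ : FreeGroup (Fin m) → ℝ) (g : FreeGroup (Fin m))
    (B : Set (FreeGroup (Fin m))) : Prop :=
  ∀ h ∈ Cfin g, FP μ 1 h B = 0

/-- `B` is a strong `g`-barrier. -/
def IsStrongBarrier {m : ℕ} (μ : FreeGroup (Fin m) → ℝ) (g : FreeGroup (Fin m))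
    (B : Set (FreeGroup (Fin m))) : Prop :=
  B ⊆ Cfin g ∧ ∀ h ∈ Cfin g, ∀ h' ∉ Cfin g, FP μ h' h B = 0


namespace Stmt9Aux

open ENNReal

variable {G : Type*} [Group G]


variable {G : Type*} [Group G]

/-- ℕ-indexed path space with padding. -/
def NPath (x y : G) (S : Set G) (k : ℕ) : Type _ :=
  {f : ℕ → G // f 0 = x ∧ f k = y ∧ (∀ j < k, f j ∉ S ∪ {y}) ∧ ∀ j, k ≤ j → f j = y}

noncomputable def nwt (ν : G → ℝ≥0∞) (k : ℕ) (f : ℕ → G) : ℝ≥0∞ :=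
  ∏ j ∈ Finset.range k, ν ((f j)⁻¹ * f (j + 1))

noncomputable def EP (ν : G → ℝ≥0∞) (x y : G) (S : Set G) : ℝ≥0∞ :=
  ∑' k : ℕ, ∑' p : NPath x y S k, nwt ν k p.1

lemma nwt_term_le (ν : G → ℝ≥0∞) {x y : G} {S : Set G} {k : ℕ} (p : NPath x y S k) :
    nwt ν k p.1 ≤ EP ν x y S :=
  le_trans (ENNReal.le_tsum p) (ENNReal.le_tsum k)

lemma nwt_congr (ν : G → ℝ≥0∞) {k : ℕ} {f g : ℕ → G} (h : ∀ j ≤ k, f j = g j) :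
    nwt ν k f = nwt ν k g := by
  unfold nwt
  refine Finset.prod_congr rfl fun j hj => ?_
  rw [Finset.mem_range] at hj
  rw [h j (le_of_lt hj), h (j+1) hj]

def glue (t : ℕ) (p q : ℕ → G) : ℕ → G := fun j => if j < t then p j else q (j - t)

lemma glue_lt {t : ℕ} {p q : ℕ → G} {j : ℕ} (h : j < t) : glue t p q j = p j := if_pos h

lemma glue_ge {t : ℕ} {p q : ℕ → G} {j : ℕ} (h : t ≤ j) : glue t p q j = q (j - t) :=
  if_neg (by omega)

lemma glue_add (t : ℕ) (p q : ℕ → G) (i : ℕ) : glue t p q (t + i) = q i := by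
  rw [glue_ge (Nat.le_add_right t i), Nat.add_sub_cancel_left]

lemma nwt_glue (ν : G → ℝ≥0∞) (t u : ℕ) (p q : ℕ → G) (hpq : p t = q 0) :
    nwt ν (t + u) (glue t p q) = nwt ν t p * nwt ν u q := by
  unfold nwt
  rw [Finset.prod_range_add]
  congr 1
  · refine Finset.prod_congr rfl fun j hj => ?_
    rw [Finset.mem_range] at hj
    rw [glue_lt hj]
    congr 1
    rcases Nat.lt_or_ge (j+1) t with h | h
    · rw [glue_lt h]
    · have hjt : j + 1 = t := by omega
      rw [glue_ge h, hjt, Nat.sub_self, ← hpq]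
  · refine Finset.prod_congr rfl fun j hj => ?_
    rw [glue_add, Nat.add_assoc, glue_add]

lemma nwt_split (ν : G → ℝ≥0∞) (t u : ℕ) (f : ℕ → G) :
    nwt ν (t + u) f = nwt ν t f * nwt ν u (fun i => f (t + i)) := by
  unfold nwt
  rw [Finset.prod_range_add]
  congr 1

/-- If the restricted first-passage sum `EP ν x h B` vanishes, then any path from `x`
avoiding `B` that hits `h` has zero weight. -/
lemma nwt_eq_zero_of_hits (ν : G → ℝ≥0∞) {x h : G} {B : Set G}
    (h0 : EP ν x h B = 0) (t : ℕ) (p : ℕ → G) (hp0 : p 0 = x)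
    (hpB : ∀ i < t, p i ∉ B) {j : ℕ} (hj : j < t) (hjh : p j = h) :
    nwt ν t p = 0 := by
  classical
  have hex : ∃ i, p i = h := ⟨j, hjh⟩
  set j0 := Nat.find hex with hj0def
  have hj0 : p j0 = h := Nat.find_spec hex
  have hj0le : j0 ≤ j := Nat.find_min' hex hjh
  have hj0t : j0 < t := lt_of_le_of_lt hj0le hj
  set p' : ℕ → G := fun i => if i < j0 then p i else h with hp'
  have hq : p' 0 = x ∧ p' j0 = h ∧ (∀ i < j0, p' i ∉ B ∪ {h}) ∧ ∀ i, j0 ≤ i → p' i = h := by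
    refine ⟨?_, by simp [hp'], ?_, fun i hi => by simp [hp', Nat.not_lt.mpr hi]⟩
    · by_cases h00 : 0 < j0
      · simp [hp', h00, hp0]
      · have : j0 = 0 := by omega
        simp [hp', this, ← hp0, ← hj0, this]
    · intro i hi
      have : p' i = p i := if_pos hi
      rw [this]
      rintro (hB' | hh')
      · exact hpB i (lt_trans hi hj0t) hB'
      · exact Nat.find_min hex hi hh'
  have hterm : nwt ν j0 p' = 0 := by
    have := nwt_term_le ν (x := x) (y := h) (S := B) ⟨p', hq⟩
    rw [h0] at this
    exact le_antisymm this zero_le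
  have hsame : nwt ν j0 p' = nwt ν j0 p := by
    refine nwt_congr ν fun i hi => ?_
    rcases Nat.lt_or_ge i j0 with h' | h'
    · exact if_pos h'
    · have : i = j0 := le_antisymm hi h'
      rw [this]; simp [hp', hj0]
  have : nwt ν t p = nwt ν j0 p * nwt ν (t - j0) (fun i => p (j0 + i)) := by
    have h1 : t = j0 + (t - j0) := by omega
    conv_lhs => rw [h1]
    exact nwt_split ν j0 (t - j0) p
  rw [this, ← hsame, hterm, zero_mul]

lemma full_sum (ν : G → ℝ≥0∞) (hν : ∑' g, ν g = 1) :
    ∀ n : ℕ, ∑' s : Fin n → G, ∏ i, ν (s i) = 1 := by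
  intro n
  induction n with
  | zero =>
    rw [tsum_eq_single (fun i => i.elim0)
      (fun b' hb' => absurd (Subsingleton.elim b' _) hb')]
    simp
  | succ n ih =>
    rw [← (Fin.consEquiv (fun _ : Fin (n + 1) => G)).tsum_eq]
    have : ∀ z : G × (Fin n → G),
        (∏ i, ν ((Fin.consEquiv (fun _ : Fin (n + 1) => G)) z i)) = ν z.1 * ∏ i, ν (z.2 i) := by
      intro z
      rw [Fin.prod_univ_succ]
      simp [Fin.consEquiv]
    simp_rw [this]
    rw [ENNReal.tsum_prod (f := fun (a : G) (b : Fin n → G) => ν a * ∏ i, ν (b i))]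
    simp_rw [ENNReal.tsum_mul_left, ih, mul_one, hν]
section Bound
variable (x y : G) (S : Set G) (n : ℕ)

local notation "D" => (Σ k : Fin n, NPath x y S (k : ℕ) × (Fin (n - (k : ℕ)) → G))

def iota (z : D) : Fin n → G := fun i =>
  if h : (i : ℕ) < (z.1 : ℕ) then (z.2.1.1 i)⁻¹ * z.2.1.1 ((i : ℕ) + 1)
  else z.2.2 ⟨(i : ℕ) - (z.1 : ℕ), by omega⟩

def st (z : D) (i : ℕ) : G :=
  if h : i < n then iota x y S n z ⟨i, h⟩ else 1

def pos (z : D) : ℕ → G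
  | 0 => x
  | (j + 1) => pos z j * st x y S n z j

variable {x y S n}

lemma st_lt (z : D) {i : ℕ} (h : i < (z.1 : ℕ)) :
    st x y S n z i = (z.2.1.1 i)⁻¹ * z.2.1.1 (i + 1) := by
  have hn : i < n := lt_of_lt_of_le h (le_of_lt z.1.isLt)
  rw [st, dif_pos hn, iota, dif_pos h]

lemma st_ge (z : D) {i : ℕ} (h1 : (z.1 : ℕ) ≤ i) (h2 : i < n) :
    st x y S n z i = z.2.2 ⟨i - (z.1 : ℕ), by omega⟩ := by
  rw [st, dif_pos h2, iota, dif_neg (by simpa using h1)]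

lemma pos_eq (z : D) : ∀ j, j ≤ (z.1 : ℕ) → pos x y S n z j = z.2.1.1 j := by
  intro j
  induction j with
  | zero => intro _; rw [pos, z.2.1.2.1]
  | succ j ih =>
    intro hj
    have hjk : j < (z.1 : ℕ) := hj
    rw [pos, ih (le_of_lt hjk), st_lt z hjk]
    group

lemma weight_eq (ν : G → ℝ≥0∞) (z : D) :
    (∏ i, ν (iota x y S n z i)) =
      nwt ν (z.1 : ℕ) z.2.1.1 * ∏ i, ν (z.2.2 i) := by
  have h0 : (∏ i, ν (iota x y S n z i)) = ∏ i ∈ Finset.range n, ν (st x y S n z i) := by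
    rw [← Fin.prod_univ_eq_prod_range (fun i => ν (st x y S n z i)) n]
    refine Finset.prod_congr rfl fun i _ => ?_
    rw [st, dif_pos i.isLt, Fin.eta]
  rw [h0]
  have hkn : (z.1 : ℕ) ≤ n := le_of_lt z.1.isLt
  have hrange : Finset.range n = Finset.range ((z.1 : ℕ) + (n - (z.1 : ℕ))) := by
    congr 1; omega
  rw [hrange, Finset.prod_range_add]
  congr 1
  · refine Finset.prod_congr rfl fun i hi => ?_
    rw [Finset.mem_range] at hi
    rw [st_lt z hi]
  · rw [← Fin.prod_univ_eq_prod_range (fun i => ν (st x y S n z ((z.1 : ℕ) + i))) _]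
    refine Finset.prod_congr rfl fun i _ => ?_
    have h2 : (z.1 : ℕ) + (i : ℕ) < n := by omega
    rw [st_ge z (Nat.le_add_right _ _) h2]
    congr 1
    apply congrArg
    apply Fin.ext
    simp

lemma iota_inj : Function.Injective (iota x y S n) := by
  rintro ⟨k1, p1, c1⟩ ⟨k2, p2, c2⟩ heq
  have hst : ∀ i, st x y S n ⟨k1, p1, c1⟩ i = st x y S n ⟨k2, p2, c2⟩ i := by
    intro i
    unfold st
    split
    · rw [heq]
    · rfl
  have hpos : ∀ j, pos x y S n ⟨k1, p1, c1⟩ j = pos x y S n ⟨k2, p2, c2⟩ j := by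
    intro j
    induction j with
    | zero => rfl
    | succ j ih => rw [pos, pos, ih, hst j]
  have hk : ∀ (k1' k2' : Fin n) (p1' : NPath x y S (k1' : ℕ) × (Fin (n - (k1' : ℕ)) → G))
      (p2' : NPath x y S (k2' : ℕ) × (Fin (n - (k2' : ℕ)) → G)),
      (∀ j, pos x y S n ⟨k1', p1'⟩ j = pos x y S n ⟨k2', p2'⟩ j) →
      ¬ ((k1' : ℕ) < (k2' : ℕ)) := by
    intro k1' k2' p1' p2' hp hlt
    have h1 : pos x y S n ⟨k1', p1'⟩ (k1' : ℕ) = y := by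
      rw [pos_eq _ _ le_rfl]; exact p1'.1.2.2.1
    have h2 : pos x y S n ⟨k2', p2'⟩ (k1' : ℕ) ∉ S ∪ {y} := by
      rw [pos_eq _ _ (le_of_lt hlt)]
      exact p2'.1.2.2.2.1 _ hlt
    rw [← hp] at h2
    exact h2 (by rw [h1]; exact Set.mem_union_right _ rfl)
  have hkk : k1 = k2 := by
    apply Fin.ext
    rcases Nat.lt_trichotomy (k1 : ℕ) (k2 : ℕ) with h | h | h
    · exact absurd h (hk k1 k2 _ _ hpos)
    · exact h
    · exact absurd h (hk k2 k1 _ _ (fun j => (hpos j).symm))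
  subst hkk
  have hp : p1 = p2 := by
    apply Subtype.ext
    funext j
    rcases le_or_gt j (k1 : ℕ) with h | h
    · rw [← pos_eq ⟨k1, p1, c1⟩ j h, ← pos_eq ⟨k1, p2, c2⟩ j h]
      exact hpos j
    · rw [p1.2.2.2.2 j (le_of_lt h), p2.2.2.2.2 j (le_of_lt h)]
  subst hp
  have hc : c1 = c2 := by
    funext i
    have h2 : (k1 : ℕ) + (i : ℕ) < n := by omega
    have h3 := hst ((k1 : ℕ) + (i : ℕ))
    rw [st_ge (⟨k1, p1, c1⟩ : D) (Nat.le_add_right (k1 : ℕ) i) h2,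
      st_ge (⟨k1, p1, c2⟩ : D) (Nat.le_add_right (k1 : ℕ) i) h2] at h3
    simpa using h3
  rw [hc]

lemma sum_range_le (ν : G → ℝ≥0∞) (hν : ∑' g, ν g = 1) :
    ∑ k ∈ Finset.range n, (∑' p : NPath x y S k, nwt ν k p.1) ≤ 1 := by
  have step1 : ∑ k ∈ Finset.range n, (∑' p : NPath x y S k, nwt ν k p.1)
      = ∑' z : D, (∏ i, ν (iota x y S n z i)) := by
    rw [ENNReal.tsum_sigma (fun k w => ∏ i, ν (iota x y S n ⟨k, w⟩ i)), tsum_fintype]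
    rw [← Fin.sum_univ_eq_sum_range (fun k => ∑' p : NPath x y S k, nwt ν k p.1) n]
    refine Finset.sum_congr rfl fun k _ => ?_
    have : ∀ w : NPath x y S (k : ℕ) × (Fin (n - (k : ℕ)) → G),
        (∏ i, ν (iota x y S n ⟨k, w⟩ i)) = nwt ν (k : ℕ) w.1.1 * ∏ i, ν (w.2 i) :=
      fun w => weight_eq ν ⟨k, w⟩
    simp_rw [this]
    rw [ENNReal.tsum_prod (f := fun (p : NPath x y S (k : ℕ)) (c : Fin (n - (k : ℕ)) → G) =>
      nwt ν (k : ℕ) p.1 * ∏ i, ν (c i))]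
    simp_rw [ENNReal.tsum_mul_left, full_sum ν hν (n - (k : ℕ)), mul_one]
  rw [step1]
  calc ∑' z : D, (∏ i, ν (iota x y S n z i))
      ≤ ∑' s : Fin n → G, ∏ i, ν (s i) :=
        ENNReal.tsum_comp_le_tsum_of_injective iota_inj _
    _ = 1 := full_sum ν hν n

end Bound

lemma EP_le_one (ν : G → ℝ≥0∞) (hν : ∑' g, ν g = 1) (x y : G) (S : Set G) :
    EP ν x y S ≤ 1 :=
  ENNReal.tsum_le_of_sum_range_le fun _ => sum_range_le ν hν


lemma sigma_npath_ext {x y : G} {S : Set G} {k1 k2 : ℕ} (a : NPath x y S k1)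
    (b : NPath x y S k2) (hk : k1 = k2) (hf : a.1 = b.1) :
    (⟨k1, a⟩ : Σ k, NPath x y S k) = ⟨k2, b⟩ := by
  subst hk; exact congrArg _ (Subtype.ext hf)

lemma mem_of_notin_diff_union {B : Set G} {b w : G} (hb : b ∈ B)
    (hw : w ∉ (B \ {b}) ∪ {b}) : w ∉ B := by
  intro hwB
  by_cases hwb : w = b
  · exact hw (Set.mem_union_right _ (by simp [hwb]))
  · exact hw (Set.mem_union_left _ ⟨hwB, by simp [hwb]⟩)

section Decomp

variable (ν : G → ℝ≥0∞) (x h : G) (B : Set G)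

local notation "R" =>
  (Σ b : B, Σ t : ℕ, Σ _p : NPath x (b : G) (B \ {(b : G)}) t, Σ u : ℕ, NPath (b : G) h ∅ u)

noncomputable def gw (z : R) : ℝ≥0∞ := nwt ν z.2.1 z.2.2.1.1 * nwt ν z.2.2.2.1 z.2.2.2.2.1

lemma EP_decomp (h0 : EP ν x h B = 0) :
    EP ν x h ∅ = ∑' b : B, EP ν x (b : G) (B \ {(b : G)}) * EP ν (b : G) h ∅ := by
  classical
  -- rewrite RHS as a single tsum over R
  have hball : ∀ b : B, EP ν x (b : G) (B \ {(b : G)}) * EP ν (b : G) h ∅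
      = ∑' (t : ℕ) (p : NPath x (b : G) (B \ {(b : G)}) t) (u : ℕ)
        (q : NPath (b : G) h ∅ u), nwt ν t p.1 * nwt ν u q.1 := by
    intro b
    rw [EP, EP]
    rw [← ENNReal.tsum_mul_right]
    refine tsum_congr fun t => ?_
    rw [← ENNReal.tsum_mul_right]
    refine tsum_congr fun p => ?_
    rw [← ENNReal.tsum_mul_left]
    refine tsum_congr fun u => ?_
    rw [← ENNReal.tsum_mul_left]
  have hRHS : (∑' b : B, EP ν x (b : G) (B \ {(b : G)}) * EP ν (b : G) h ∅)
      = ∑' z : R, gw ν x h B z := by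
    refine Eq.symm ?_
    calc ∑' z : R, gw ν x h B z
        = ∑' (b : B) (w : Σ t : ℕ, Σ _p : NPath x (b : G) (B \ {(b : G)}) t,
            Σ u : ℕ, NPath (b : G) h ∅ u), gw ν x h B ⟨b, w⟩ :=
          ENNReal.tsum_sigma (fun b w => gw ν x h B ⟨b, w⟩)
      _ = ∑' (b : B) (t : ℕ) (w : Σ _p : NPath x (b : G) (B \ {(b : G)}) t,
            Σ u : ℕ, NPath (b : G) h ∅ u), gw ν x h B ⟨b, t, w⟩ :=
          tsum_congr fun b => ENNReal.tsum_sigma (fun t w => gw ν x h B ⟨b, t, w⟩)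
      _ = ∑' (b : B) (t : ℕ) (p : NPath x (b : G) (B \ {(b : G)}) t)
            (w : Σ u : ℕ, NPath (b : G) h ∅ u), gw ν x h B ⟨b, t, p, w⟩ :=
          tsum_congr fun b => tsum_congr fun t =>
            ENNReal.tsum_sigma (fun p w => gw ν x h B ⟨b, t, p, w⟩)
      _ = ∑' (b : B) (t : ℕ) (p : NPath x (b : G) (B \ {(b : G)}) t) (u : ℕ)
            (q : NPath (b : G) h ∅ u), gw ν x h B ⟨b, t, p, u, q⟩ :=
          tsum_congr fun b => tsum_congr fun t => tsum_congr fun p =>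
            ENNReal.tsum_sigma (fun u q => gw ν x h B ⟨b, t, p, u, q⟩)
      _ = ∑' b : B, EP ν x (b : G) (B \ {(b : G)}) * EP ν (b : G) h ∅ :=
          tsum_congr fun b => (hball b).symm
  have hLHS : EP ν x h ∅ = ∑' w : Σ k, NPath x h ∅ k, nwt ν w.1 w.2.1 :=
    (ENNReal.tsum_sigma (fun k (p : NPath x h ∅ k) => nwt ν k p.1)).symm
  rw [hRHS, hLHS]
  -- basic facts about elements of R with nonzero weight
  have pB : ∀ (z : R), ∀ i < z.2.1, z.2.2.1.1 i ∉ B := by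
    rintro ⟨b, t, p, u, q⟩ i hi
    exact mem_of_notin_diff_union b.2 (p.2.2.2.1 i hi)
  have glue0 : ∀ (z : R), glue z.2.1 z.2.2.1.1 z.2.2.2.2.1 0 = x := by
    rintro ⟨b, t, p, u, q⟩
    show glue t p.1 q.1 0 = x
    rcases Nat.eq_zero_or_pos t with rfl | ht
    · rw [glue_ge le_rfl]
      show q.1 0 = x
      rw [q.2.1, ← p.2.1, p.2.2.1]
    · rw [glue_lt ht, p.2.1]
  have glueh : ∀ (z : R), gw ν x h B z ≠ 0 → ∀ j < z.2.1,
      glue z.2.1 z.2.2.1.1 z.2.2.2.2.1 j ≠ h := by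
    rintro ⟨b, t, p, u, q⟩ hz j hj hjh
    rw [glue_lt hj] at hjh
    have h1 : nwt ν t p.1 = 0 :=
      nwt_eq_zero_of_hits ν h0 t p.1 p.2.1 (pB ⟨b, t, p, u, q⟩) hj hjh
    exact hz (by rw [gw]; show nwt ν t p.1 * nwt ν u q.1 = 0; rw [h1, zero_mul])
  -- validity of glued path
  have mkMem : ∀ (z : R), gw ν x h B z ≠ 0 →
      (glue z.2.1 z.2.2.1.1 z.2.2.2.2.1 0 = x ∧
       glue z.2.1 z.2.2.1.1 z.2.2.2.2.1 (z.2.1 + z.2.2.2.1) = h ∧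
       (∀ j < z.2.1 + z.2.2.2.1, glue z.2.1 z.2.2.1.1 z.2.2.2.2.1 j ∉ (∅ : Set G) ∪ {h}) ∧
       ∀ j, z.2.1 + z.2.2.2.1 ≤ j → glue z.2.1 z.2.2.1.1 z.2.2.2.2.1 j = h) := by
    rintro ⟨b, t, p, u, q⟩ hz
    refine ⟨glue0 ⟨b, t, p, u, q⟩, ?_, ?_, ?_⟩
    · show glue t p.1 q.1 (t + u) = h
      rw [glue_add]; exact q.2.2.1
    · show ∀ j < t + u, glue t p.1 q.1 j ∉ (∅ : Set G) ∪ {h}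
      intro j hj
      simp only [Set.empty_union, Set.mem_singleton_iff]
      rcases Nat.lt_or_ge j t with hlt | hge
      · exact glueh ⟨b, t, p, u, q⟩ hz j hlt
      · rw [glue_ge hge]
        have hlt2 : j - t < u := by omega
        have h2 := q.2.2.2.1 _ hlt2
        simpa using h2
    · show ∀ j, t + u ≤ j → glue t p.1 q.1 j = h
      intro j hj
      rw [glue_ge (by omega)]
      exact q.2.2.2.2 _ (by omega)
  have key : (∑' w : Σ k, NPath x h ∅ k, nwt ν w.1 w.2.1) = ∑' z : R, gw ν x h B z := by
    refine tsum_eq_tsum_of_ne_zero_bij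
      (fun zz => ⟨zz.1.2.1 + zz.1.2.2.2.1,
        ⟨glue zz.1.2.1 zz.1.2.2.1.1 zz.1.2.2.2.2.1, mkMem zz.1 zz.2⟩⟩) ?_ ?_ ?_
    · -- injectivity
      rintro ⟨⟨b1, t1, p1, u1, q1⟩, hz1⟩ ⟨⟨b2, t2, p2, u2, q2⟩, hz2⟩ heq
      simp only at heq
      have hn : t1 + u1 = t2 + u2 := congrArg Sigma.fst heq
      have hfun : glue t1 p1.1 q1.1 = glue t2 p2.1 q2.1 :=
        congrArg (fun w : Σ k, NPath x h ∅ k => w.2.1) heq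
      have hrt : ∀ (b : B) (t : ℕ) (p : NPath x (b : G) (B \ {(b : G)}) t)
          (u : ℕ) (q : NPath (b : G) h ∅ u), glue t p.1 q.1 t = (b : G) := by
        intro b t p u q
        rw [glue_ge le_rfl, Nat.sub_self, q.2.1]
      have hT : t1 = t2 := by
        by_contra hne
        rcases Nat.lt_or_ge t1 t2 with hlt | hge
        · have h1 : glue t1 p1.1 q1.1 t1 = (b1 : G) := hrt b1 t1 p1 u1 q1
          have h2 : glue t2 p2.1 q2.1 t1 = p2.1 t1 := glue_lt hlt
          have h3 : p2.1 t1 ∉ B := mem_of_notin_diff_union b2.2 (p2.2.2.2.1 t1 hlt)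
          rw [hfun, h2] at h1
          exact h3 (h1 ▸ b1.2)
        · have hlt : t2 < t1 := by omega
          have h1 : glue t2 p2.1 q2.1 t2 = (b2 : G) := hrt b2 t2 p2 u2 q2
          have h2 : glue t1 p1.1 q1.1 t2 = p1.1 t2 := glue_lt hlt
          have h3 : p1.1 t2 ∉ B := mem_of_notin_diff_union b1.2 (p1.2.2.2.1 t2 hlt)
          rw [← hfun, h2] at h1
          exact h3 (h1 ▸ b2.2)
      subst hT
      have hb : b1 = b2 := by
        apply Subtype.ext
        rw [← hrt b1 t1 p1 u1 q1, ← hrt b2 t1 p2 u2 q2, hfun]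
      subst hb
      have hU : u1 = u2 := by omega
      subst hU
      have hp : p1 = p2 := by
        apply Subtype.ext; funext j
        rcases Nat.lt_or_ge j t1 with hlt | hge
        · rw [← glue_lt (p := p1.1) (q := q1.1) hlt, ← glue_lt (p := p2.1) (q := q2.1) hlt,
            hfun]
        · rw [p1.2.2.2.2 j hge, p2.2.2.2.2 j hge]
      subst hp
      have hq : q1 = q2 := by
        apply Subtype.ext; funext i
        rw [← glue_add t1 p1.1 q1.1 i, ← glue_add t1 p1.1 q2.1 i, hfun]
      subst hq
      rfl
    · -- support f ⊆ range
      rintro ⟨n, r⟩ hw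
      have hfw : nwt ν n r.1 ≠ 0 := hw
      have hexists : ∃ j, r.1 j ∈ B := by
        by_contra hno
        push_neg at hno
        have hmem : r.1 0 = x ∧ r.1 n = h ∧ (∀ j < n, r.1 j ∉ B ∪ {h}) ∧
            ∀ j, n ≤ j → r.1 j = h := by
          refine ⟨r.2.1, r.2.2.1, fun j hj => ?_, r.2.2.2.2⟩
          rintro (hB' | hh')
          · exact hno j hB'
          · have hne := r.2.2.2.1 j hj
            simp only [Set.empty_union, Set.mem_singleton_iff] at hne
            exact hne (by simpa using hh')
        have hle := nwt_term_le ν (x := x) (y := h) (S := B) ⟨r.1, hmem⟩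
        rw [h0] at hle
        exact hfw (le_antisymm hle zero_le)
      set t := Nat.find hexists with htdef
      have ht : r.1 t ∈ B := Nat.find_spec hexists
      have hmin : ∀ i < t, r.1 i ∉ B := fun i hi => Nat.find_min hexists hi
      have htn : t ≤ n := by
        by_contra hgt
        push_neg at hgt
        have h1 : r.1 n = h := r.2.2.1
        have h2 : r.1 t = h := r.2.2.2.2 t (by omega)
        exact Nat.find_min hexists (show n < t by omega) (by rw [h1, ← h2]; exact ht)
      set p : ℕ → G := fun j => if j < t then r.1 j else r.1 t with hpdef
      set q : ℕ → G := fun i => r.1 (t + i) with hqdef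
      have hpmem : p 0 = x ∧ p t = r.1 t ∧
          (∀ j < t, p j ∉ (B \ {r.1 t}) ∪ {r.1 t}) ∧ ∀ j, t ≤ j → p j = r.1 t := by
        refine ⟨?_, by simp [hpdef], ?_, fun j hj => by simp [hpdef, Nat.not_lt.mpr hj]⟩
        · rcases Nat.eq_zero_or_pos t with h' | h'
          · simp [hpdef, h', ← r.2.1]
          · simp [hpdef, h', r.2.1]
        · intro j hj
          have hpj : p j = r.1 j := if_pos hj
          rw [hpj]
          rintro (hB' | hh')
          · exact hmin j hj hB'.1
          · exact hmin j hj (by rw [Set.mem_singleton_iff] at hh'; rw [hh']; exact ht)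
      have hqmem : q 0 = r.1 t ∧ q (n - t) = h ∧
          (∀ i < n - t, q i ∉ (∅ : Set G) ∪ {h}) ∧ ∀ i, n - t ≤ i → q i = h := by
        refine ⟨by simp [hqdef], ?_, ?_, fun i hi => ?_⟩
        · show r.1 (t + (n - t)) = h
          have htt : t + (n - t) = n := by omega
          rw [htt]; exact r.2.2.1
        · intro i hi
          exact r.2.2.2.1 (t + i) (by omega)
        · exact r.2.2.2.2 (t + i) (by omega)
      set z0 : R := ⟨⟨r.1 t, ht⟩, t, ⟨p, hpmem⟩, n - t, ⟨q, hqmem⟩⟩ with hz0def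
      have hglue : glue t p q = r.1 := by
        funext j
        rcases Nat.lt_or_ge j t with hlt | hge
        · rw [glue_lt hlt]; exact if_pos hlt
        · rw [glue_ge hge]
          show r.1 (t + (j - t)) = r.1 j
          have hjj : t + (j - t) = j := by omega
          rw [hjj]
      have hz0 : gw ν x h B z0 ≠ 0 := by
        have hgz : gw ν x h B z0 = nwt ν (t + (n - t)) (glue t p q) :=
          (nwt_glue ν t (n - t) p q (by simp [hpdef, hqdef])).symm
        rw [hgz, hglue]
        have h2 : t + (n - t) = n := by omega
        rw [h2]
        exact hfw
      refine ⟨⟨z0, hz0⟩, ?_⟩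
      exact sigma_npath_ext _ _ (show t + (n - t) = n by omega) hglue
    · -- weights agree
      rintro ⟨⟨b, t, p, u, q⟩, hz⟩
      show nwt ν (t + u) (glue t p.1 q.1) = gw ν x h B ⟨b, t, p, u, q⟩
      rw [nwt_glue ν t u p.1 q.1 (by rw [p.2.2.1, q.2.1])]
      rfl
  exact key

end Decomp
def finNPEquiv (x y : G) (S : Set G) (k : ℕ) :
    {f : Fin (k + 1) → G // f 0 = x ∧ f (Fin.last k) = y ∧
        ∀ j : Fin k, f j.castSucc ∉ S ∪ {y}} ≃ NPath x y S k where
  toFun f := ⟨fun j => if h : j < k + 1 then f.1 ⟨j, h⟩ else y, by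
    dsimp only
    constructor
    · rw [dif_pos (Nat.succ_pos k)]
      exact f.2.1
    constructor
    · rw [dif_pos (Nat.lt_succ_self k)]
      exact f.2.2.1
    constructor
    · intro j hj
      rw [dif_pos (Nat.lt_succ_of_lt hj)]
      exact f.2.2.2 ⟨j, hj⟩
    · intro j hj
      by_cases h' : j < k + 1
      · rw [dif_pos h']
        have hjk : j = k := by omega
        subst hjk
        exact f.2.2.1
      · rw [dif_neg h']⟩
  invFun p := ⟨fun j => p.1 j, by
    refine ⟨by simpa using p.2.1, by simpa using p.2.2.1, fun j => ?_⟩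
    have := p.2.2.2.1 j j.isLt
    simpa using this⟩
  left_inv f := by
    apply Subtype.ext
    funext j
    show (if h : (j : ℕ) < k + 1 then f.1 ⟨(j : ℕ), h⟩ else y) = f.1 j
    rw [dif_pos j.isLt]
  right_inv p := by
    apply Subtype.ext
    funext j
    show (if h : j < k + 1 then p.1 ((⟨j, h⟩ : Fin (k + 1)) : ℕ) else y) = p.1 j
    by_cases h' : j < k + 1
    · rw [dif_pos h']
    · rw [dif_neg h', p.2.2.2.2 j (by omega)]

lemma FP_eq_toReal (μ : G → ℝ) (hμ0 : ∀ g, 0 ≤ μ g) (x y : G) (S : Set G)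
    (hfin : EP (fun g => ENNReal.ofReal (μ g)) x y S ≠ ⊤) :
    FP μ x y S = (EP (fun g => ENNReal.ofReal (μ g)) x y S).toReal := by
  set ν : G → ℝ≥0∞ := fun g => ENNReal.ofReal (μ g) with hνdef
  have hwt : ∀ k (p : NPath x y S k), (nwt ν k p.1).toReal
      = ∏ j ∈ Finset.range k, μ ((p.1 j)⁻¹ * p.1 (j + 1)) := by
    intro k p
    rw [nwt, ENNReal.toReal_prod]
    exact Finset.prod_congr rfl fun j _ => ENNReal.toReal_ofReal (hμ0 _)
  have hwt_ne : ∀ k (p : NPath x y S k), nwt ν k p.1 ≠ ⊤ := fun k p =>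
    (ENNReal.prod_lt_top (fun a _ => ENNReal.ofReal_lt_top)).ne
  have hin_ne : ∀ k : ℕ, (∑' p : NPath x y S k, nwt ν k p.1) ≠ ⊤ := fun k =>
    ne_top_of_le_ne_top hfin (by rw [EP]; exact ENNReal.le_tsum k)
  rw [EP, ENNReal.tsum_toReal_eq hin_ne, FP]
  refine tsum_congr fun k => ?_
  rw [ENNReal.tsum_toReal_eq (fun p => hwt_ne k p)]
  rw [← Equiv.tsum_eq (finNPEquiv x y S k) (fun p : NPath x y S k => (nwt ν k p.1).toReal)]
  refine tsum_congr fun f => ?_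
  rw [hwt k (finNPEquiv x y S k f)]
  rw [← Fin.prod_univ_eq_prod_range (fun j =>
    μ ((((finNPEquiv x y S k f).1 j))⁻¹ * (finNPEquiv x y S k f).1 (j + 1))) k]
  refine Finset.prod_congr rfl fun j _ => ?_
  have h1 : ((finNPEquiv x y S k f).1 : ℕ → G) (j : ℕ) = f.1 j.castSucc := by
    show (if h : (j : ℕ) < k + 1 then f.1 ⟨(j : ℕ), h⟩ else y) = f.1 j.castSucc
    rw [dif_pos (Nat.lt_succ_of_lt j.isLt)]
    congr 1
  have h2 : ((finNPEquiv x y S k f).1 : ℕ → G) ((j : ℕ) + 1) = f.1 j.succ := by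
    show (if h : (j : ℕ) + 1 < k + 1 then f.1 ⟨(j : ℕ) + 1, h⟩ else y) = f.1 j.succ
    rw [dif_pos (Nat.succ_lt_succ j.isLt)]
    congr 1
  rw [h1, h2]


end Stmt9Aux

/-- Lemma 2: if `B` is a strong `g`-barrier then for every `h ∈ C_fin(g)`
and `x ∉ C_fin(g)`, `F_μ(x,h) = Σ_{b ∈ B} F_μ(x,b; B \ {b}) F_μ(b,h)`. -/
theorem stmt9 {m : ℕ} (μ : FreeGroup (Fin m) → ℝ) (hμ : IsProb μ)
    (g : FreeGroup (Fin m)) (hg : g ≠ 1) (B : Set (FreeGroup (Fin m)))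
    (hB : IsStrongBarrier μ g B) (h : FreeGroup (Fin m)) (hh : h ∈ Cfin g)
    (x : FreeGroup (Fin m)) (hx : x ∉ Cfin g) :
    FP μ x h ∅ = ∑' b : B, FP μ x b (B \ {(b : FreeGroup (Fin m))}) * FP μ b h ∅ := by
  classical
  obtain ⟨hμ0, hμ1⟩ := hμ
  set ν : FreeGroup (Fin m) → ENNReal := fun g => ENNReal.ofReal (μ g) with hνdef
  have hsum : Summable μ := by
    by_contra hns
    rw [tsum_eq_zero_of_not_summable hns] at hμ1
    exact one_ne_zero hμ1.symm
  have hν1 : ∑' g, ν g = 1 := by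
    rw [hνdef]
    rw [← ENNReal.ofReal_tsum_of_nonneg hμ0 hsum, hμ1, ENNReal.ofReal_one]
  have hne : ∀ (x y : FreeGroup (Fin m)) (S : Set (FreeGroup (Fin m))),
      Stmt9Aux.EP ν x y S ≠ ⊤ := fun x y S =>
    (lt_of_le_of_lt (Stmt9Aux.EP_le_one ν hν1 x y S) ENNReal.one_lt_top).ne
  have hFP : ∀ (x y : FreeGroup (Fin m)) (S : Set (FreeGroup (Fin m))),
      FP μ x y S = (Stmt9Aux.EP ν x y S).toReal := fun x y S =>
    Stmt9Aux.FP_eq_toReal μ hμ0 x y S (hne x y S)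
  have h0R : FP μ x h B = 0 := hB.2 h hh x hx
  have h0 : Stmt9Aux.EP ν x h B = 0 := by
    have h1 := hFP x h B
    rw [h0R] at h1
    rcases (ENNReal.toReal_eq_zero_iff _).mp h1.symm with h3 | h3
    · exact h3
    · exact absurd h3 (hne x h B)
  rw [hFP x h ∅, Stmt9Aux.EP_decomp ν x h B h0,
    ENNReal.tsum_toReal_eq (fun b => ENNReal.mul_ne_top (hne _ _ _) (hne _ _ _))]
  refine tsum_congr fun b => ?_
  rw [ENNReal.toReal_mul, hFP, hFP]
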